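/- Let $X$ be an unbounded complete hyperbolic space, $\theta\in X$, and $\phi$ satisfy conditions (C1)–(C4). Let $f,g$ be nonexpansive self-mappings of $X$ with $d_{\theta,\phi}(f,g)\le\tfrac12\phi^{-1}(1/m)$ for some $m\in\mathbb{N}$. Then $\rho(f(z),g(z))\le \frac{2}{\phi^{-1}(1/m)}\,d_{\theta,\phi}(f,g)$ for all $z\in\bar B(\theta,m)$. -/

import Mathlib

/-- A hyperbolic metric space structure: a choice of convex combination
`W x y l = (1-l) x ⊕ l y` along distinguished geodesic segments. -/
structure HyperbolicW (X : Type*) [MetricSpace X] where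
  W : X → X → ℝ → X
  dist_left : ∀ x y : X, ∀ l : ℝ, l ∈ Set.Icc (0:ℝ) 1 →
    dist x (W x y l) = l * dist x y
  dist_right : ∀ x y : X, ∀ l : ℝ, l ∈ Set.Icc (0:ℝ) 1 →
    dist (W x y l) y = (1 - l) * dist x y
  hyp : ∀ x y z : X, ∀ l : ℝ, l ∈ Set.Icc (0:ℝ) 1 →
    dist (W x y l) (W x z l) ≤ l * dist y z
  subseg : ∀ x y : X, ∀ l μ : ℝ, μ ∈ Set.Icc (0:ℝ) 1 → l ∈ Set.Icc (0:ℝ) 1 →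
    μ ≤ l → 0 < l → W x y μ = W x (W x y l) (μ / l)

/-- A mapping is nonexpansive if it is 1-Lipschitz. -/
def Nonexp {X : Type*} [MetricSpace X] (f : X → X) : Prop :=
  ∀ x y : X, dist (f x) (f y) ≤ dist x y

/-- A metric space is unbounded. -/
def Unbdd (X : Type*) [MetricSpace X] : Prop :=
  ¬ Bornology.IsBounded (Set.univ : Set X)

/-- `d_{n,θ}(f,g) = sup { dist (f x) (g x) : x ∈ closedBall θ n }`. -/
noncomputable def dnSup {X : Type*} [MetricSpace X] (θ : X) (n : ℕ) (f g : X → X) : ℝ :=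
  sSup ((fun x => dist (f x) (g x)) '' Metric.closedBall θ (n : ℝ))

/-- The metric `d_{θ,φ}(f,g) = ∑ₙ φ⁻¹(1/n) dₙ/(1+dₙ)`, expressed through
`ψ = φ⁻¹` (the sum over `n ≥ 1` is reindexed as a sum over `n + 1`, `n : ℕ`). -/
noncomputable def Dphi {X : Type*} [MetricSpace X] (θ : X) (ψ : ℝ → ℝ) (f g : X → X) : ℝ :=
  ∑' n : ℕ, ψ (1 / ((n : ℝ) + 1)) *
    (dnSup θ (n + 1) f g / (1 + dnSup θ (n + 1) f g))

/-- pointwise distance on a ball is controlled by `d_{θ,φ}`. -/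
theorem local_from_global {X : Type*} [MetricSpace X] [CompleteSpace X]
    (H : HyperbolicW X) (hub : Unbdd X) (θ : X)
    -- φ satisfies (C1)–(C4), with inverse ψ:
    (b : ℝ) (hb : 0 < b) (I : Set ℝ)
    (hI : I = Set.Ioo 0 b ∨ I = Set.Ioc 0 b)
    (φ ψ : ℝ → ℝ)
    (hpos : ∀ t ∈ I, 0 < φ t)
    (hcont : ContinuousOn φ I)
    (hmono : StrictMonoOn φ I)
    (hlim : Filter.Tendsto φ (nhdsWithin 0 (Set.Ioi 0)) (nhds 0))
    (η : ℝ) (hη : η ∈ I)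
    (hconc : ConcaveOn ℝ (Set.Ioo 0 η) φ)
    (hηφ : η ≤ φ η)
    (hone : ∃ t ∈ I, φ t = 1)
    (hinv1 : ∀ t ∈ I, ψ (φ t) = t)
    (hinv2 : ∀ a ∈ Set.Ioc (0:ℝ) (φ η), ψ a ∈ I ∧ φ (ψ a) = a)
    (hC3 : ∀ k : ℕ, ∃ C : ℝ, 0 < C ∧ ∀ m : ℕ, 1 ≤ m →
      ψ (1 / (m:ℝ)) ≤ C * ψ (1 / ((k:ℝ) + (m:ℝ))))
    (hC4 : Summable (fun n : ℕ => ((n:ℝ) + 1) * ψ (1 / ((n:ℝ) + 1))))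
    -- the mappings:
    (f g : X → X) (hf : Nonexp f) (hg : Nonexp g)
    (m : ℕ) (hm : 1 ≤ m)
    (hd : Dphi θ ψ f g ≤ ψ (1 / (m:ℝ)) / 2) :
    ∀ z ∈ Metric.closedBall θ (m : ℝ),
      dist (f z) (g z) ≤ (2 / ψ (1 / (m:ℝ))) * Dphi θ ψ f g := by
  intro z hz
  -- I sandwiched between Ioo 0 b and Ioc 0 b
  have hI1 : I ⊆ Set.Ioc 0 b := by
    rcases hI with h | h
    · subst h; exact Set.Ioo_subset_Ioc_self
    · subst h; exact subset_rfl
  have hI2 : Set.Ioo 0 b ⊆ I := by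
    rcases hI with h | h
    · subst h; exact subset_rfl
    · subst h; exact Set.Ioo_subset_Ioc_self
  obtain ⟨t₁, ht₁I, hφt₁⟩ := hone
  have ht₁pos : 0 < t₁ := (hI1 ht₁I).1
  -- ψ is positive on (0,1]
  have psi_pos : ∀ a : ℝ, 0 < a → a ≤ 1 → 0 < ψ a := by
    intro a ha ha1
    have hev1 : ∀ᶠ s in nhdsWithin 0 (Set.Ioi 0), φ s < a :=
      hlim.eventually (gt_mem_nhds ha)
    have hev2 : ∀ᶠ s in nhdsWithin 0 (Set.Ioi 0), s < t₁ :=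
      Filter.Eventually.filter_mono nhdsWithin_le_nhds (gt_mem_nhds ht₁pos)
    have hev3 : ∀ᶠ s in nhdsWithin (0:ℝ) (Set.Ioi 0), s ∈ Set.Ioi (0:ℝ) :=
      eventually_mem_nhdsWithin
    obtain ⟨s, hsa, hspos'⟩ := ((hev1.and hev2).and hev3).exists
    obtain ⟨hsa, hst₁⟩ := hsa
    have hspos : 0 < s := Set.mem_Ioi.mp hspos'
    have hsub : Set.Icc s t₁ ⊆ I := by
      intro u hu
      rcases eq_or_lt_of_le hu.2 with h | h
      · rwa [h]
      · exact hI2 ⟨lt_of_lt_of_le hspos hu.1, lt_of_lt_of_le h (hI1 ht₁I).2⟩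
    have hivt := intermediate_value_Icc (le_of_lt hst₁) (hcont.mono hsub)
    have hamem : a ∈ Set.Icc (φ s) (φ t₁) := by
      rw [hφt₁]; exact ⟨le_of_lt hsa, ha1⟩
    obtain ⟨t, htmem, hφt⟩ := hivt hamem
    have htI : t ∈ I := hsub htmem
    have : ψ a = t := by rw [← hφt, hinv1 t htI]
    rw [this]
    exact lt_of_lt_of_le hspos htmem.1
  -- basic facts about dnSup
  have bdd : ∀ n : ℕ,
      BddAbove ((fun x => dist (f x) (g x)) '' Metric.closedBall θ (n : ℝ)) := by
    intro n
    refine ⟨dist (f θ) (g θ) + 2 * n, ?_⟩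
    rintro _ ⟨x, hx, rfl⟩
    have hx' : dist x θ ≤ n := Metric.mem_closedBall.mp hx
    have h1 : dist (f x) (g x) ≤ dist (f x) (f θ) + dist (f θ) (g θ) + dist (g θ) (g x) :=
      dist_triangle4 _ _ _ _
    have h2 : dist (f x) (f θ) ≤ dist x θ := hf x θ
    have h3 : dist (g θ) (g x) ≤ dist θ x := hg θ x
    rw [dist_comm θ x] at h3
    linarith
  have memθ : ∀ n : ℕ, dist (f θ) (g θ) ∈
      ((fun x => dist (f x) (g x)) '' Metric.closedBall θ (n : ℝ)) := by
    intro n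
    exact ⟨θ, by simp, rfl⟩
  have dn_nonneg : ∀ n : ℕ, 0 ≤ dnSup θ n f g := fun n =>
    le_trans dist_nonneg (le_csSup (bdd n) (memθ n))
  -- nonnegativity and summability of the series terms
  have hψn : ∀ n : ℕ, 0 < ψ (1 / ((n : ℝ) + 1)) := by
    intro n
    apply psi_pos
    · positivity
    · rw [div_le_one (by positivity)]
      have : (0:ℝ) ≤ (n:ℝ) := Nat.cast_nonneg n
      linarith
  have hterm_nonneg : ∀ n : ℕ,
      0 ≤ ψ (1 / ((n : ℝ) + 1)) * (dnSup θ (n + 1) f g / (1 + dnSup θ (n + 1) f g)) := by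
    intro n
    have hd0 := dn_nonneg (n + 1)
    exact mul_nonneg (hψn n).le (div_nonneg hd0 (by linarith))
  have hsumm : Summable (fun n : ℕ =>
      ψ (1 / ((n : ℝ) + 1)) * (dnSup θ (n + 1) f g / (1 + dnSup θ (n + 1) f g))) := by
    apply Summable.of_nonneg_of_le hterm_nonneg _ hC4
    intro n
    have hd0 := dn_nonneg (n + 1)
    have hfrac : dnSup θ (n + 1) f g / (1 + dnSup θ (n + 1) f g) ≤ 1 := by
      rw [div_le_one (by linarith)]; linarith
    have h1 : ψ (1 / ((n : ℝ) + 1)) * (dnSup θ (n + 1) f g / (1 + dnSup θ (n + 1) f g))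
        ≤ ψ (1 / ((n : ℝ) + 1)) * 1 :=
      mul_le_mul_of_nonneg_left hfrac (hψn n).le
    have h2 : ψ (1 / ((n : ℝ) + 1)) * 1 ≤ ((n : ℝ) + 1) * ψ (1 / ((n : ℝ) + 1)) := by
      rw [mul_one]
      have : (0:ℝ) ≤ (n:ℝ) := Nat.cast_nonneg n
      nlinarith [(hψn n).le]
    linarith
  -- the key term at index m - 1
  have hnat : (m - 1) + 1 = m := Nat.succ_pred_eq_of_pos hm
  have hcast : ((m - 1 : ℕ) : ℝ) + 1 = (m : ℝ) := by
    rw [← hnat]; push_cast [Nat.cast_sub hm]; ring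
  have hkey := Summable.le_tsum hsumm (m - 1) (fun j _ => hterm_nonneg j)
  rw [hnat, hcast] at hkey
  -- notation
  set d := dnSup θ m f g with hdDef
  set ψm := ψ (1 / (m : ℝ)) with hψmDef
  set D := Dphi θ ψ f g with hDdef
  have hψm : 0 < ψm := by
    apply psi_pos
    · have : (0:ℝ) < m := by exact_mod_cast hm
      positivity
    · rw [div_le_one (by exact_mod_cast hm)]
      exact_mod_cast hm
  have hd0 : 0 ≤ d := dn_nonneg m
  have hkey' : ψm * (d / (1 + d)) ≤ D := hkey
  set q := d / (1 + d) with hqDef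
  have h1d : (0:ℝ) < 1 + d := by linarith
  have hqd : q * (1 + d) = d := div_mul_cancel₀ d (ne_of_gt h1d)
  have hq0 : 0 ≤ q := div_nonneg hd0 h1d.le
  -- q ≤ 1/2, hence d ≤ 1
  have hqhalf : q ≤ 1 / 2 := by
    have h : ψm * q ≤ ψm * (1 / 2) := by
      rw [mul_one_div]; linarith
    exact (mul_le_mul_iff_right₀ hψm).mp h
  have hd1 : d ≤ 1 := by nlinarith
  have hq2 : d ≤ 2 * q := by nlinarith
  have hq3 : 2 * q ≤ (2 / ψm) * D := by
    rw [div_mul_eq_mul_div, le_div_iff₀ hψm]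
    nlinarith
  have hzd : dist (f z) (g z) ≤ d := by
    apply le_csSup (bdd m)
    exact ⟨z, hz, rfl⟩
  linarith
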